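/- If H : X × [0,1] → X is a homotopy with H(x,0) = x for all x, then H maps aw(X) × [0,1] into aw(X). -/

import Mathlib

open unitInterval

/-- The algebraic 1-wild set: points admitting a null sequence of non-null-homotopic loops. -/
def awSet (X : Type*) [TopologicalSpace X] : Set X :=
  {x | ∃ γ : ℕ → Path x x, (∀ n, ¬(γ n).Homotopic (Path.refl x)) ∧
    ∀ U ∈ nhds x, ∀ᶠ n in Filter.atTop, Set.range (γ n) ⊆ U}

open CategoryTheory FundamentalGroupoid FundamentalGroupoidFunctor

attribute [local instance] Path.Homotopic.setoid

universe u

/-- If `g` is homotopic to the identity and a loop `γ` maps to a null-homotopic loop under `g`,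
then `γ` is itself null-homotopic. -/
lemma aux_nonnull {X : Type u} [TopologicalSpace X] {g : C(X, X)}
    (G : ContinuousMap.Homotopy (ContinuousMap.id X) g) {x : X} (γ : Path x x)
    (h : (γ.map g.continuous).Homotopic (Path.refl (g x))) :
    γ.Homotopic (Path.refl x) := by
  let X' : TopCat := TopCat.of X
  let N := homotopicMapsNatIso (X := X') (Y := X') G
  let P : fromTop (X := X') x ⟶ fromTop (X := X') x := ⟦γ⟧
  have hnat := N.naturality P
  have hg : (FundamentalGroupoid.map g).map P
      = (⟦γ.map g.continuous⟧ : Path.Homotopic.Quotient (g x) (g x)) := by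
    erw [FundamentalGroupoid.map_map]
    exact (Path.Homotopic.Quotient.mk_map γ g).symm
  have hf : (FundamentalGroupoid.map (ContinuousMap.id X)).map P = P := by
    erw [FundamentalGroupoid.map_map]
    show _ = ⟦γ⟧
    erw [← Path.Homotopic.Quotient.mk_map γ (ContinuousMap.id X)]
    congr 1
  rw [hf, hg, Quotient.sound h] at hnat
  have key : P = 𝟙 (fromTop (X := X') x) := by
    have h2 : (𝟙 (fromTop (X := X') x)) ≫ N.app (fromTop (X := X') x)
        = P ≫ N.app (fromTop (X := X') x) := by
      erw [Category.id_comp, hnat]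
      exact (Category.comp_id (N.app (fromTop (X := X') x))).symm
    exact ((cancel_mono (N.app (fromTop (X := X') x))).mp h2).symm
  have : (⟦γ⟧ : Path.Homotopic.Quotient x x) = ⟦Path.refl x⟧ := by
    rw [← id_eq_path_refl (fromTop (X := X') x)]; exact key
  exact Quotient.exact this

/-- If `H : X × [0,1] → X` is a homotopy with `H(x,0) = x` for all `x`, then `H` maps
`aw(X) × [0,1]` into `aw(X)`. -/
theorem stmt7 {X : Type*} [TopologicalSpace X]
    (H : C(X × unitInterval, X)) (h0 : ∀ x : X, H (x, 0) = x) :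
    ∀ x ∈ awSet X, ∀ t : unitInterval, H (x, t) ∈ awSet X := by
  rintro x ⟨γ, hγ, hnull⟩ t
  let g : C(X, X) := H.comp ⟨fun y => (y, t), by continuity⟩
  let G : ContinuousMap.Homotopy (ContinuousMap.id X) g :=
    { toFun := fun p => H (p.2, p.1 * t)
      continuous_toFun := H.continuous.comp (by continuity)
      map_zero_left := fun y => by
        show H (y, 0 * t) = y
        rw [zero_mul, h0]
      map_one_left := fun y => by
        show H (y, 1 * t) = g y
        rw [one_mul]; rfl }
  refine ⟨fun n => (γ n).map g.continuous, fun n hn => hγ n (aux_nonnull G (γ n) hn), ?_⟩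
  intro U hU
  have hU' : g ⁻¹' U ∈ nhds x := g.continuous.continuousAt.preimage_mem_nhds hU
  filter_upwards [hnull _ hU'] with n hn
  rintro y ⟨s, rfl⟩
  exact hn ⟨s, rfl⟩
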